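/- For every β ≥ 0, μ ∈ ℝ and σ > 0, one has ∫_ℝ (1/σ)·((x − μ)²/σ² − 1)·φ_{μ,σ}(x)^(β+1) dx = −β/((2π)^(β/2)·σ^(β+1)·(β+1)^(3/2)), where φ_{μ,σ}(x) = (√(2π)·σ)⁻¹·exp(−(x−μ)²/(2σ²)). -/

import Mathlib

open Real MeasureTheory

lemma gauss_sq_integral {b : ℝ} (hb : 0 < b) :
    ∫ x : ℝ, x ^ 2 * Real.exp (-b * x ^ 2) = Real.sqrt (π / b) / (2 * b) := by
  have hint2 : Integrable fun x : ℝ => x ^ 2 * Real.exp (-b * x ^ 2) := by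
    have := integrable_rpow_mul_exp_neg_mul_sq hb (show (-1 : ℝ) < 2 by norm_num)
    simpa [Real.rpow_two] using this
  have hint0 : Integrable fun x : ℝ => Real.exp (-b * x ^ 2) := integrable_exp_neg_mul_sq hb
  have hint1 : Integrable fun x : ℝ => x * Real.exp (-b * x ^ 2) := integrable_mul_exp_neg_mul_sq hb
  have hderiv : ∀ x : ℝ, HasDerivAt (fun x : ℝ => x * Real.exp (-b * x ^ 2))
      (Real.exp (-b * x ^ 2) - 2 * b * (x ^ 2 * Real.exp (-b * x ^ 2))) x := by
    intro x
    have h1 : HasDerivAt (fun x : ℝ => -b * x ^ 2) (-b * (2 * x)) x := by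
      simpa using ((hasDerivAt_pow 2 x).const_mul (-b))
    have h2 : HasDerivAt (fun x : ℝ => Real.exp (-b * x ^ 2))
        (Real.exp (-b * x ^ 2) * (-b * (2 * x))) x := h1.exp
    have : HasDerivAt (fun y : ℝ => id y * Real.exp (-b * y ^ 2))
        (1 * Real.exp (-b * x ^ 2) + x * (Real.exp (-b * x ^ 2) * (-b * (2 * x)))) x :=
      (hasDerivAt_id x).mul h2
    convert this using 1
    simp only [id_eq]
    ring
  have hf' : Integrable fun x : ℝ =>
      Real.exp (-b * x ^ 2) - 2 * b * (x ^ 2 * Real.exp (-b * x ^ 2)) :=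
    hint0.sub (hint2.const_mul _)
  have hzero := integral_eq_zero_of_hasDerivAt_of_integrable hderiv hf' hint1
  rw [integral_sub hint0 (hint2.const_mul _), integral_const_mul, integral_gaussian] at hzero
  have hb' : (2 : ℝ) * b ≠ 0 := by positivity
  field_simp at hzero ⊢
  linarith

/-- In the normal model, the second component of `ξ_β`:
`∫ (1/σ)·((x−μ)²/σ² − 1)·φ_{μ,σ}(x)^(β+1) dx = −β/((2π)^(β/2)·σ^(β+1)·(β+1)^(3/2))`. -/
theorem normal_xi_beta_scale (β μ σ : ℝ) (hβ : 0 ≤ β) (hσ : 0 < σ) :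
    ∫ x : ℝ, (1 / σ) * ((x - μ) ^ 2 / σ ^ 2 - 1) *
        ((Real.sqrt (2 * π) * σ)⁻¹ * Real.exp (-(x - μ) ^ 2 / (2 * σ ^ 2))) ^ (β + 1)
      = -β / ((2 * π) ^ (β / 2) * σ ^ (β + 1) * (β + 1) ^ ((3 : ℝ) / 2)) := by
  have hπ : 0 < π := pi_pos
  have h2π : (0 : ℝ) < 2 * π := by positivity
  have hβ1 : (0 : ℝ) < β + 1 := by linarith
  set c : ℝ := (β + 1) / (2 * σ ^ 2) with hc_def
  have hc : 0 < c := by positivity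
  have hS : 0 < Real.sqrt (2 * π) := Real.sqrt_pos.2 h2π
  set A : ℝ := (Real.sqrt (2 * π) * σ)⁻¹ with hA_def
  have hA : 0 < A := by positivity
  set C : ℝ := A ^ (β + 1) with hC_def
  have key : ∀ x : ℝ, (1 / σ) * ((x - μ) ^ 2 / σ ^ 2 - 1) *
      (A * Real.exp (-(x - μ) ^ 2 / (2 * σ ^ 2))) ^ (β + 1)
      = (fun y : ℝ => C * ((1 / σ) * (y ^ 2 / σ ^ 2 - 1) * Real.exp (-c * y ^ 2))) (x - μ) := by
    intro x
    have h1 : (A * Real.exp (-(x - μ) ^ 2 / (2 * σ ^ 2))) ^ (β + 1)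
        = C * Real.exp (-c * (x - μ) ^ 2) := by
      rw [Real.mul_rpow hA.le (Real.exp_pos _).le, ← Real.exp_mul]
      congr 2
      rw [hc_def]
      field_simp
    rw [h1]; ring
  simp_rw [key]
  rw [integral_sub_right_eq_self (μ := volume)
    (fun y : ℝ => C * ((1 / σ) * (y ^ 2 / σ ^ 2 - 1) * Real.exp (-c * y ^ 2))) μ]
  have hint2 : Integrable fun x : ℝ => x ^ 2 * Real.exp (-c * x ^ 2) := by
    have := integrable_rpow_mul_exp_neg_mul_sq hc (show (-1 : ℝ) < 2 by norm_num)
    simpa [Real.rpow_two] using this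
  have hint0 : Integrable fun x : ℝ => Real.exp (-c * x ^ 2) := integrable_exp_neg_mul_sq hc
  have hsplit : ∀ x : ℝ, C * ((1 / σ) * (x ^ 2 / σ ^ 2 - 1) * Real.exp (-c * x ^ 2))
      = (C / σ ^ 3) * (x ^ 2 * Real.exp (-c * x ^ 2)) - (C / σ) * Real.exp (-c * x ^ 2) := by
    intro x
    field_simp
  simp_rw [hsplit]
  rw [integral_sub ((hint2.const_mul _)) ((hint0.const_mul _)), integral_const_mul,
    integral_const_mul, gauss_sq_integral hc, integral_gaussian]
  -- algebra
  set R : ℝ := Real.sqrt (β + 1) with hR_def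
  have hR : 0 < R := Real.sqrt_pos.2 hβ1
  have hR2 : R ^ 2 = β + 1 := Real.sq_sqrt hβ1.le
  set S : ℝ := Real.sqrt (2 * π) with hS_def
  have hsqc : Real.sqrt (π / c) = S * σ / R := by
    rw [show π / c = 2 * π * σ ^ 2 / (β + 1) by rw [hc_def]; field_simp]
    rw [Real.sqrt_div (by positivity) _, Real.sqrt_mul h2π.le, Real.sqrt_sq hσ.le, hS_def, hR_def]
  have hSβ : S ^ β = (2 * π) ^ (β / 2) := by
    rw [hS_def, Real.sqrt_eq_rpow, ← Real.rpow_mul h2π.le]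
    congr 1
    ring
  have hC_eq : C = ((2 * π) ^ (β / 2) * S * σ ^ (β + 1))⁻¹ := by
    rw [hC_def, hA_def, Real.inv_rpow (by positivity), Real.mul_rpow hS.le hσ.le,
      Real.rpow_add hS, Real.rpow_one, hSβ]
  have h32 : (β + 1) ^ ((3 : ℝ) / 2) = (β + 1) * R := by
    rw [hR_def, Real.sqrt_eq_rpow, show (3 : ℝ) / 2 = 1 + 1 / 2 by norm_num,
      Real.rpow_add hβ1, Real.rpow_one]
  rw [hsqc, hC_eq, h32]
  have hP : 0 < (2 * π) ^ (β / 2) := Real.rpow_pos_of_pos h2π _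
  have hQ : 0 < σ ^ (β + 1) := Real.rpow_pos_of_pos hσ _
  set P : ℝ := (2 * π) ^ (β / 2)
  set Q : ℝ := σ ^ (β + 1)
  rw [hc_def]
  field_simp
  nlinarith [hR2, sq_nonneg R, hP.le, hQ.le, hS.le, hσ.le]
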